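/- arXiv:1611.09014 — 3 statements merged into one kernel-verified Lean document; each statement's English description precedes it below -/
import Mathlib

section
/- Completeness of the range-restricting transformation rr: for every clause set M, if rr(M) is satisfiable then M is satisfiable. -/
namespace BUMG

/-- First-order terms over function symbols `F`, with variables indexed by `ℕ`. -/
inductive Term (F : Type) : Type where
  | var : ℕ → Term F
  | app : F → List (Term F) → Term F

namespace Term
variable {F : Type}

/-- The list of variables occurring in a term. -/
def vars : Term F → List ℕ
  | var n => [n]
  | app _ ts => ts.attach.flatMap (fun t => vars t.1)
decreasing_by simp_wf; have := List.sizeOf_lt_of_mem t.2; omega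

/-- The function symbols (with the arity of the occurrence) occurring in a term. -/
def funcs : Term F → List (F × ℕ)
  | var _ => []
  | app f ts => (f, ts.length) :: ts.attach.flatMap (fun t => funcs t.1)
decreasing_by simp_wf; have := List.sizeOf_lt_of_mem t.2; omega

/-- Applying a substitution to a term. -/
def subst (g : ℕ → Term F) : Term F → Term F
  | var n => g n
  | app f ts => app f (ts.attach.map (fun t => subst g t.1))
decreasing_by simp_wf; have := List.sizeOf_lt_of_mem t.2; omega

/-- The number of occurrences of symbols (variables and function symbols) in a term. -/
def size : Term F → ℕ
  | var _ => 1
  | app _ ts => 1 + (ts.attach.map (fun t => size t.1)).sum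
decreasing_by simp_wf; have := List.sizeOf_lt_of_mem t.2; omega

/-- A term is ground iff it contains no variables. -/
def IsGround (t : Term F) : Prop := t.vars = []

def isVar : Term F → Bool
  | var _ => true
  | app _ _ => false

/-- A proper functional term is a term that is neither a variable nor a constant. -/
def isPF : Term F → Bool
  | app _ (_ :: _) => true
  | _ => false

/-- The subterm relation. -/
inductive Subterm : Term F → Term F → Prop
  | refl (t : Term F) : Subterm t t
  | app {s t : Term F} {f : F} {ts : List (Term F)} :
      t ∈ ts → Subterm s t → Subterm s (app f ts)

end Term

/-- Atoms over predicate symbols `P` and function symbols `F`. -/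
structure Atom (P F : Type) where
  pred : P
  args : List (Term F)

namespace Atom
variable {P F : Type}

def subst (g : ℕ → Term F) (a : Atom P F) : Atom P F := ⟨a.pred, a.args.map (Term.subst g)⟩
def vars (a : Atom P F) : List ℕ := a.args.flatMap Term.vars
def IsGround (a : Atom P F) : Prop := a.vars = []
def funcs (a : Atom P F) : List (F × ℕ) := a.args.flatMap Term.funcs
/-- Whether the atom contains a proper functional term. -/
def hasPF (a : Atom P F) : Bool := a.args.any Term.isPF
def size (a : Atom P F) : ℕ := 1 + (a.args.map Term.size).sum

end Atom

/-- A clause `H₁ ∨ ... ∨ Hₘ ← B₁ ∧ ... ∧ Bₖ` with head atoms `heads`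
and body atoms `body`. -/
structure Clause (P F : Type) where
  heads : List (Atom P F)
  body : List (Atom P F)

namespace Clause
variable {P F : Type}

def atoms (C : Clause P F) : List (Atom P F) := C.heads ++ C.body
def vars (C : Clause P F) : List ℕ := C.atoms.flatMap Atom.vars
def bodyVars (C : Clause P F) : List ℕ := C.body.flatMap Atom.vars
def headVars (C : Clause P F) : List ℕ := C.heads.flatMap Atom.vars
def maxVar (C : Clause P F) : ℕ := C.vars.foldr max 0
def subst (g : ℕ → Term F) (C : Clause P F) : Clause P F :=
  ⟨C.heads.map (Atom.subst g), C.body.map (Atom.subst g)⟩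
/-- The predicate symbols (with the arity of the occurrence) occurring in a clause. -/
def preds (C : Clause P F) : List (P × ℕ) := C.atoms.map (fun a => (a.pred, a.args.length))
/-- The function symbols (with the arity of the occurrence) occurring in a clause. -/
def funcs (C : Clause P F) : List (F × ℕ) := C.atoms.flatMap Atom.funcs
/-- The number of occurrences of symbols in a clause. -/
def size (C : Clause P F) : ℕ := (C.atoms.map Atom.size).sum

/-- A clause is range-restricted iff every variable occurring in it occurs in its body. -/
def RangeRestricted (C : Clause P F) : Prop := ∀ v ∈ C.vars, v ∈ C.bodyVars

/-- A Bernays–Schönfinkel clause: every functional term occurring in it is a constant. -/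
def BS (C : Clause P F) : Prop := ∀ fn ∈ C.funcs, fn.2 = 0

end Clause

/-- A clause set is range-restricted iff all its clauses are. -/
def RangeRestrictedSet {P F : Type} (M : Set (Clause P F)) : Prop :=
  ∀ C ∈ M, C.RangeRestricted

/-- The predicate symbols (with arities) occurring in a clause set. -/
def predsOf {P F : Type} (M : Set (Clause P F)) : Set (P × ℕ) :=
  { pn | ∃ C ∈ M, pn ∈ C.preds }

/-- The function symbols (with arities) occurring in a clause set. -/
def funcsOf {P F : Type} (M : Set (Clause P F)) : Set (F × ℕ) :=
  { fn | ∃ C ∈ M, fn ∈ C.funcs }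

/-- A signature: a set of predicate symbols with arities and
a set of function symbols with arities. -/
structure Sig (P F : Type) where
  preds : Set (P × ℕ)
  funcs : Set (F × ℕ)

/-- The clause set `M` is well-formed over the signature `σ`: all symbols occurring in `M`
belong to `σ` (with matching arities). -/
def WFSet {P F : Type} (σ : Sig P F) (M : Set (Clause P F)) : Prop :=
  ∀ C ∈ M, (∀ pn ∈ C.preds, pn ∈ σ.preds) ∧ (∀ fn ∈ C.funcs, fn ∈ σ.funcs)

/-- The total number of occurrences of symbols in a clause set. -/
noncomputable def setSize {P F : Type} (M : Set (Clause P F)) : ℕ :=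
  ∑ᶠ C ∈ M, C.size

/-! ### Herbrand semantics -/

/-- A substitution is ground iff it maps every variable to a ground term. -/
def GroundSubst {F : Type} (g : ℕ → Term F) : Prop := ∀ n, (g n).IsGround

/-- A (Herbrand) interpretation `I` (a set of ground atoms) satisfies a clause iff
it satisfies every ground instance of it. -/
def satClause {P F : Type} (I : Set (Atom P F)) (C : Clause P F) : Prop :=
  ∀ g : ℕ → Term F, GroundSubst g →
    (∀ a ∈ C.body, a.subst g ∈ I) → ∃ a ∈ C.heads, a.subst g ∈ I

/-- A clause set is satisfiable iff some Herbrand interpretation (a set of ground atoms)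
satisfies every ground instance of every clause of it. -/
def Satisfiable {P F : Type} (M : Set (Clause P F)) : Prop :=
  ∃ I : Set (Atom P F), (∀ a ∈ I, a.IsGround) ∧ ∀ C ∈ M, satClause I C

/-! ### Equality axioms and E-satisfiability -/

/-- The equality atom `s ≈ t` (`eqP` being the distinguished equality predicate `≈`). -/
def eqAtom {P F : Type} (eqP : P) (s t : Term F) : Atom P F := ⟨eqP, [s, t]⟩

def rangeVars {F : Type} (n : ℕ) : List (Term F) := (List.range n).map Term.var

def xsList {F : Type} (n : ℕ) : List (Term F) := (List.range n).map (fun i => Term.var (2*i))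
def ysList {F : Type} (n : ℕ) : List (Term F) := (List.range n).map (fun i => Term.var (2*i+1))
def eqConjList {P F : Type} (eqP : P) (n : ℕ) : List (Atom P F) :=
  (List.range n).map (fun i => eqAtom eqP (Term.var (2*i)) (Term.var (2*i+1)))

/-- The equality axioms `EAX`: `≈` is reflexive, symmetric, transitive and compatible with
the given function and predicate symbols. -/
def EAX {P F : Type} (eqP : P) (Ps : Set (P × ℕ)) (Fs : Set (F × ℕ)) : Set (Clause P F) :=
  { ⟨[eqAtom eqP (Term.var 0) (Term.var 0)], []⟩,
    ⟨[eqAtom eqP (Term.var 1) (Term.var 0)], [eqAtom eqP (Term.var 0) (Term.var 1)]⟩,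
    ⟨[eqAtom eqP (Term.var 0) (Term.var 2)],
      [eqAtom eqP (Term.var 0) (Term.var 1), eqAtom eqP (Term.var 1) (Term.var 2)]⟩ } ∪
  { D | ∃ fn ∈ Fs,
      D = ⟨[eqAtom eqP (Term.app fn.1 (xsList fn.2)) (Term.app fn.1 (ysList fn.2))],
           eqConjList eqP fn.2⟩ } ∪
  { D | ∃ pn ∈ Ps,
      D = ⟨[⟨pn.1, ysList pn.2⟩], ⟨pn.1, xsList pn.2⟩ :: eqConjList eqP pn.2⟩ }

/-- A clause set `M` is E-satisfiable iff `M` together with the equality axioms for the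
symbols occurring in `M` is satisfiable. -/
def ESatisfiable {P F : Type} (eqP : P) (M : Set (Clause P F)) : Prop :=
  Satisfiable (M ∪ EAX eqP (predsOf M) (funcsOf M))

/-! ### Range-restricting transformations -/

/-- The atom `dom(t)`. -/
def domAtom {P F : Type} (domP : P) (t : Term F) : Atom P F := ⟨domP, [t]⟩

/-- The term `c` for a constant `c`. -/
def cTerm {F : Type} (c : F) : Term F := Term.app c []

/-- The clause `dom(c) ← ⊤`. -/
def domcClause {P F : Type} (domP : P) (c : F) : Clause P F :=
  ⟨[domAtom domP (cTerm c)], []⟩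

/-- Range-restricting a clause (Step (2) of `crr`, Step (3) of `rr`):
`H ← B` becomes `H ← B ∧ dom(x₁) ∧ ... ∧ dom(xₖ)` where `x₁,...,xₖ` are the variables
occurring in the head but not in the body. -/
def rangeRestrictClause {P F : Type} (domP : P) (C : Clause P F) : Clause P F :=
  ⟨C.heads, C.body ++
    ((C.headVars.filter (fun v => v ∉ C.bodyVars)).dedup).map
      (fun v => domAtom domP (Term.var v))⟩

/-- The argument list of the term abstraction of an atom: argument positions holding
non-variable terms are replaced by fresh variables. -/
def abstrArgs {F : Type} (base : ℕ) (ts : List (Term F)) : List (Term F) :=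
  ts.mapIdx (fun i t => if t.isVar then t else Term.var (base + i))

/-- Step (2) of the `rr` transformation: for each clause `H ← B` of `M`, each body atom
`P(t₁,...,tₙ)` of `B` with term abstraction `P(s₁,...,sₙ)` and abstraction substitution `α`,
the clauses `dom(xᵢ)α ← P(s₁,...,sₙ)` for every `xᵢ` in the domain of `α`. -/
def step2Set {P F : Type} (domP : P) (M : Set (Clause P F)) : Set (Clause P F) :=
  { D | ∃ C ∈ M, ∃ a ∈ C.body, ∃ i : Fin a.args.length,
        (a.args.get i).isVar = false ∧
        D = ⟨[domAtom domP (a.args.get i)],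
             [⟨a.pred, abstrArgs (C.maxVar + 1) a.args⟩]⟩ }

/-- Step (4) of the `rr` transformation: the clauses `dom(xᵢ) ← P(x₁,...,xₙ)` for every
`n`-ary predicate symbol `P` of the signature and every `1 ≤ i ≤ n`. -/
def step4Set {P F : Type} (domP : P) (Ps : Set (P × ℕ)) : Set (Clause P F) :=
  { D | ∃ pn ∈ Ps, ∃ i, i < pn.2 ∧
        D = ⟨[domAtom domP (Term.var i)], [⟨pn.1, rangeVars pn.2⟩]⟩ }

/-- Step (5) of the `rr` transformation: the clauses `dom(xᵢ) ← dom(f(x₁,...,xₙ))` for every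
`n`-ary function symbol `f` of the signature and every `1 ≤ i ≤ n`. -/
def step5Set {P F : Type} (domP : P) (Fs : Set (F × ℕ)) : Set (Clause P F) :=
  { D | ∃ fn ∈ Fs, ∃ i, i < fn.2 ∧
        D = ⟨[domAtom domP (Term.var i)],
             [domAtom domP (Term.app fn.1 (rangeVars fn.2))]⟩ }

/-- The new range-restricting transformation `rr` (over the signature `σ`, with fresh unary
predicate symbol `dom` and constant `c`): the clauses of `M`, the clause `dom(c) ← ⊤` and
the Step-(2) clauses, all range-restricted by Step (3), together with the Step-(4) and
Step-(5) clauses. -/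
def rr {P F : Type} [DecidableEq P] [DecidableEq F] (σ : Sig P F) (domP : P) (c : F)
    (M : Set (Clause P F)) : Set (Clause P F) :=
  (rangeRestrictClause domP '' (M ∪ {domcClause domP c} ∪ step2Set domP M))
  ∪ step4Set domP σ.preds ∪ step5Set domP σ.funcs

/-- Step (3) of the classical transformation `crr`: the clauses
`dom(f(x₁,...,xₙ)) ← dom(x₁) ∧ ... ∧ dom(xₙ)` enumerating the Herbrand universe. -/
def crrStep3 {P F : Type} (domP : P) (Fs : Set (F × ℕ)) : Set (Clause P F) :=
  { D | ∃ fn ∈ Fs,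
        D = ⟨[domAtom domP (Term.app fn.1 (rangeVars fn.2))],
             (List.range fn.2).map (fun i => domAtom domP (Term.var i))⟩ }

/-- The classical range-restricting transformation `crr`. -/
def crr {P F : Type} [DecidableEq P] [DecidableEq F] (σ : Sig P F) (domP : P) (c : F)
    (M : Set (Clause P F)) : Set (Clause P F) :=
  (rangeRestrictClause domP '' (M ∪ {domcClause domP c})) ∪ crrStep3 domP σ.funcs

/-! ### Shifting -/

/-- Partial flattening of the arguments of a non-equational body atom: top-level proper
functional terms are replaced by fresh variables. The `j`-th body atom uses the fresh
variables `base + Nat.pair j i`. -/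
def pfArgs {P F : Type} [DecidableEq P] (eqP : P) (base j : ℕ) (a : Atom P F) : Atom P F :=
  if a.pred = eqP then a
  else ⟨a.pred, a.args.mapIdx (fun i t => if t.isPF then Term.var (base + Nat.pair j i) else t)⟩

/-- The equations `tᵢ ≈ xᵢ` introduced by partially flattening a body atom. -/
def pfEqs {P F : Type} [DecidableEq P] (eqP : P) (base j : ℕ) (a : Atom P F) :
    List (Atom P F) :=
  if a.pred = eqP then []
  else (a.args.mapIdx (fun i t => (i, t))).filterMap
        (fun p => if p.2.isPF then
            some (eqAtom eqP p.2 (Term.var (base + Nat.pair j p.1))) else none)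

/-- Partial flattening of a clause. -/
def pfClause {P F : Type} [DecidableEq P] (eqP : P) (C : Clause P F) : Clause P F :=
  ⟨C.heads,
   C.body.mapIdx (fun j a => pfArgs eqP (C.maxVar + 1) j a) ++
   (C.body.mapIdx (fun j a => pfEqs eqP (C.maxVar + 1) j a)).flatten⟩

/-- The reflexivity unit clause `x ≈ x ← ⊤`. -/
def reflClause {P F : Type} (eqP : P) : Clause P F :=
  ⟨[eqAtom eqP (Term.var 0) (Term.var 0)], []⟩

/-- The partial flattening transformation `pf`. -/
def pf {P F : Type} [DecidableEq P] (eqP : P) (M : Set (Clause P F)) : Set (Clause P F) :=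
  pfClause eqP '' M ∪ {reflClause eqP}

/-- The atom `P̄(t₁,...,tₙ)` for the atom `P(t₁,...,tₙ)`, where `bar` maps each predicate
symbol `P` to the fresh predicate symbol `P̄` uniquely associated with it. -/
def barAtom {P F : Type} (bar : P → P) (a : Atom P F) : Atom P F := ⟨bar a.pred, a.args⟩

/-- Basic shifting of a clause: the body atoms containing a proper functional term are
moved, negated (via `bar`), into the head. -/
def bsClause {P F : Type} (bar : P → P) (C : Clause P F) : Clause P F :=
  ⟨C.heads ++ (C.body.filter (fun a => a.hasPF)).map (barAtom bar),
   C.body.filter (fun a => !a.hasPF)⟩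

/-- The predicate symbols (with arities) of shifted atoms of `M`. -/
def shiftedPreds {P F : Type} (M : Set (Clause P F)) : Set (P × ℕ) :=
  { pn | ∃ C ∈ M, ∃ a ∈ C.body, a.hasPF = true ∧ pn = (a.pred, a.args.length) }

/-- The basic shifting transformation `bs`: shift deep body atoms and add the shifted atom
consistency clauses `⊥ ← P(x₁,...,xₙ) ∧ P̄(x₁,...,xₙ)`. -/
def bs {P F : Type} (bar : P → P) (M : Set (Clause P F)) : Set (Clause P F) :=
  bsClause bar '' M ∪
  { D | ∃ pn ∈ shiftedPreds M,
        D = ⟨[], [⟨pn.1, rangeVars pn.2⟩, ⟨bar pn.1, rangeVars pn.2⟩]⟩ }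

/-- The shifting transformation: `sh(M) = bs(pf(M))`. -/
def sh {P F : Type} [DecidableEq P] (eqP : P) (bar : P → P) (M : Set (Clause P F)) :
    Set (Clause P F) :=
  bs bar (pf eqP M)

/-! ### Blocking -/

/-- The head `x ≈ y ∨ x ≉ y` of the blocking clauses. -/
def blockSplitHead {P F : Type} (eqP neqP : P) : List (Atom P F) :=
  [eqAtom eqP (Term.var 0) (Term.var 1), eqAtom neqP (Term.var 0) (Term.var 1)]

/-- The clause `⊥ ← x ≈ y ∧ x ≉ y`. -/
def eqNeqBot {P F : Type} (eqP neqP : P) : Clause P F :=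
  ⟨[], [eqAtom eqP (Term.var 0) (Term.var 1), eqAtom neqP (Term.var 0) (Term.var 1)]⟩

/-- The unrestricted domain blocking transformation `blud`. -/
def blud {P F : Type} (domP eqP neqP : P) (M : Set (Clause P F)) : Set (Clause P F) :=
  M ∪ { ⟨blockSplitHead eqP neqP, [domAtom domP (Term.var 0), domAtom domP (Term.var 1)]⟩,
        eqNeqBot eqP neqP }

/-- The atom `sub(s,t)`. -/
def subAtom {P F : Type} (subP : P) (s t : Term F) : Atom P F := ⟨subP, [s, t]⟩

/-- The axioms describing the subterm relationship: `sub(x,x) ← dom(x)` and, for every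
`n`-ary function symbol `f` of the signature and `1 ≤ i ≤ n`,
`sub(x, f(x₁,...,xₙ)) ← sub(x,xᵢ) ∧ dom(x) ∧ dom(f(x₁,...,xₙ))`. -/
def subClauses {P F : Type} (domP subP : P) (Fs : Set (F × ℕ)) : Set (Clause P F) :=
  { ⟨[subAtom subP (Term.var 0) (Term.var 0)], [domAtom domP (Term.var 0)]⟩ } ∪
  { D | ∃ fn ∈ Fs, ∃ i, i < fn.2 ∧
        D = ⟨[subAtom subP (Term.var fn.2) (Term.app fn.1 (rangeVars fn.2))],
             [subAtom subP (Term.var fn.2) (Term.var i),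
              domAtom domP (Term.var fn.2),
              domAtom domP (Term.app fn.1 (rangeVars fn.2))]⟩ }

/-- The subterm domain blocking transformation `blsd`. -/
def blsd {P F : Type} (σ : Sig P F) (domP eqP neqP subP : P) (M : Set (Clause P F)) :
    Set (Clause P F) :=
  M ∪ subClauses domP subP σ.funcs ∪
  { ⟨blockSplitHead eqP neqP, [subAtom subP (Term.var 0) (Term.var 1)]⟩,
    eqNeqBot eqP neqP }

/-- The subterm predicate blocking transformation `blsp`. -/
def blsp {P F : Type} (σ : Sig P F) (domP eqP neqP subP : P) (M : Set (Clause P F)) :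
    Set (Clause P F) :=
  M ∪ subClauses domP subP σ.funcs ∪
  { D | ∃ p : P, (p, 1) ∈ σ.preds ∧
        D = ⟨blockSplitHead eqP neqP,
             [subAtom subP (Term.var 0) (Term.var 1),
              ⟨p, [Term.var 0]⟩, ⟨p, [Term.var 1]⟩]⟩ } ∪
  { eqNeqBot eqP neqP }

/-- The unrestricted predicate blocking transformation `blup`. -/
def blup {P F : Type} (σ : Sig P F) (domP eqP neqP : P) (M : Set (Clause P F)) :
    Set (Clause P F) :=
  M ∪ { D | ∃ p : P, (p, 1) ∈ σ.preds ∧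
        D = ⟨blockSplitHead eqP neqP, [⟨p, [Term.var 0]⟩, ⟨p, [Term.var 1]⟩]⟩ } ∪
  { eqNeqBot eqP neqP }

/-! ### Combined transformations -/

/-- The base transformations `rr`, `sh∘rr`, `crr`, `sh∘crr`
(composition read left-to-right, so `(sh∘rr)(M) = rr(sh(M))`). -/
inductive BaseTr | rr | shrr | crr | shcrr

/-- The optional blocking transformations. -/
inductive BlockTr | id | blsd | blsp | blud | blup

def applyBase {P F : Type} [DecidableEq P] [DecidableEq F] (σ : Sig P F) (domP : P) (c : F)
    (eqP : P) (bar : P → P) : BaseTr → Set (Clause P F) → Set (Clause P F)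
  | .rr, M => rr σ domP c M
  | .shrr, M => rr σ domP c (sh eqP bar M)
  | .crr, M => crr σ domP c M
  | .shcrr, M => crr σ domP c (sh eqP bar M)

def applyBlock {P F : Type} (σ : Sig P F) (domP eqP neqP subP : P) :
    BlockTr → Set (Clause P F) → Set (Clause P F)
  | .id, M => M
  | .blsd, M => blsd σ domP eqP neqP subP M
  | .blsp, M => blsp σ domP eqP neqP subP M
  | .blud, M => blud domP eqP neqP M
  | .blup, M => blup σ domP eqP neqP M

/-- A combined transformation: a base transformation optionally followed by a blocking
transformation (composition read left-to-right). -/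
def applyTr {P F : Type} [DecidableEq P] [DecidableEq F] (σ : Sig P F) (domP : P) (c : F)
    (eqP neqP subP : P) (bar : P → P) (b : BaseTr) (τ : BlockTr) (M : Set (Clause P F)) :
    Set (Clause P F) :=
  applyBlock σ domP eqP neqP subP τ (applyBase σ domP c eqP bar b M)

/-- The clause `x ≈ x ← dom(x)`. -/
def reflDomClause {P F : Type} (domP eqP : P) : Clause P F :=
  ⟨[eqAtom eqP (Term.var 0) (Term.var 0)], [domAtom domP (Term.var 0)]⟩

end BUMG

namespace BUMG


attribute [local instance] Classical.propDecidable

namespace RRaux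

theorem term_induct {F : Type} {motive : Term F → Prop}
    (hv : ∀ n, motive (Term.var n))
    (ha : ∀ (f : F) (ts : List (Term F)), (∀ t ∈ ts, motive t) → motive (Term.app f ts)) :
    ∀ t, motive t
  | .var n => hv n
  | .app f ts => ha f ts (fun t ht => term_induct hv ha t)
decreasing_by simp_wf; have := List.sizeOf_lt_of_mem ht; omega

variable {P F : Type}

theorem attach_flatMap {α β : Type*} (l : List α) (f : α → List β) :
    l.attach.flatMap (fun t => f t.1) = l.flatMap f := by
  rw [List.flatMap, List.flatMap, List.attach_map_val]

theorem subst_var (g : ℕ → Term F) (n : ℕ) : (Term.var n).subst g = g n := by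
  rw [Term.subst]

theorem subst_app (g : ℕ → Term F) (f : F) (ts : List (Term F)) :
    (Term.app f ts).subst g = Term.app f (ts.map (Term.subst g)) := by
  rw [Term.subst]; rw [List.attach_map_val]

theorem vars_var (n : ℕ) : (Term.var (F := F) n).vars = [n] := by rw [Term.vars]

theorem vars_app (f : F) (ts : List (Term F)) :
    (Term.app f ts).vars = ts.flatMap Term.vars := by
  rw [Term.vars, attach_flatMap]

theorem funcs_app (f : F) (ts : List (Term F)) :
    (Term.app f ts).funcs = (f, ts.length) :: ts.flatMap Term.funcs := by
  rw [Term.funcs, attach_flatMap]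

theorem isGround_app {f : F} {ts : List (Term F)} :
    (Term.app f ts).IsGround ↔ ∀ t ∈ ts, t.IsGround := by
  rw [Term.IsGround, vars_app, List.flatMap_eq_nil_iff]; rfl

theorem subst_isGround {g : ℕ → Term F} (hg : GroundSubst g) (t : Term F) :
    (t.subst g).IsGround := by
  induction t using term_induct with
  | hv n => rw [subst_var]; exact hg n
  | ha f ts ih =>
      rw [subst_app, isGround_app]
      intro s hs
      obtain ⟨u, hu, rfl⟩ := List.mem_map.mp hs
      exact ih u hu

theorem subst_congr {g h : ℕ → Term F} (t : Term F) (hgh : ∀ x ∈ t.vars, g x = h x) :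
    t.subst g = t.subst h := by
  induction t using term_induct with
  | hv n => rw [subst_var, subst_var]; exact hgh n (by rw [vars_var]; exact List.mem_singleton.mpr rfl)
  | ha f ts ih =>
      rw [subst_app, subst_app]
      congr 1
      refine List.map_congr_left (fun u hu => ih u hu (fun x hx => hgh x ?_))
      rw [vars_app]; exact List.mem_flatMap.mpr ⟨u, hu, hx⟩

noncomputable def eval (D : Set (Term F)) (c0 : Term F) (v : ℕ → Term F) : Term F → Term F
  | .var n => v n
  | .app f ts =>
      if Term.app f (ts.attach.map (fun t => eval D c0 v t.1)) ∈ D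
      then Term.app f (ts.attach.map (fun t => eval D c0 v t.1)) else c0
decreasing_by all_goals (simp_wf; have := List.sizeOf_lt_of_mem t.2; omega)

theorem eval_var (D : Set (Term F)) (c0 : Term F) (v : ℕ → Term F) (n : ℕ) :
    eval D c0 v (Term.var n) = v n := by rw [eval]

theorem eval_app (D : Set (Term F)) (c0 : Term F) (v : ℕ → Term F) (f : F) (ts : List (Term F)) :
    eval D c0 v (Term.app f ts) =
      if Term.app f (ts.map (eval D c0 v)) ∈ D then Term.app f (ts.map (eval D c0 v)) else c0 := by
  rw [eval, List.attach_map_val]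

theorem eval_mem {D : Set (Term F)} {c0 : Term F} {v : ℕ → Term F}
    (hc : c0 ∈ D) (hv : ∀ n, v n ∈ D) (t : Term F) : eval D c0 v t ∈ D := by
  induction t using term_induct with
  | hv n => rw [eval_var]; exact hv n
  | ha f ts ih =>
      rw [eval_app]
      by_cases h : Term.app f (ts.map (eval D c0 v)) ∈ D
      · rw [if_pos h]; exact h
      · rw [if_neg h]; exact hc

theorem eval_subst (D : Set (Term F)) (c0 : Term F) (w g : ℕ → Term F) (t : Term F) :
    eval D c0 w (t.subst g) = eval D c0 (fun n => eval D c0 w (g n)) t := by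
  induction t using term_induct with
  | hv n => rw [subst_var, eval_var]
  | ha f ts ih =>
      rw [subst_app, eval_app, eval_app]
      have : (ts.map (Term.subst g)).map (eval D c0 w)
          = ts.map (eval D c0 (fun n => eval D c0 w (g n))) := by
        rw [List.map_map]; exact List.map_congr_left (fun u hu => ih u hu)
      rw [this]

theorem eval_eq_subst {D : Set (Term F)} {c0 : Term F} {v : ℕ → Term F} {σF : Set (F × ℕ)}
    (hcl : ∀ (f : F) (ts : List (Term F)), (f, ts.length) ∈ σF → Term.app f ts ∈ D →
      ∀ t ∈ ts, t ∈ D)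
    (t : Term F) (hf : ∀ fn ∈ t.funcs, fn ∈ σF) (hm : t.subst v ∈ D) :
    eval D c0 v t = t.subst v := by
  induction t using term_induct with
  | hv n => rw [eval_var, subst_var]
  | ha f ts ih =>
      rw [subst_app] at hm ⊢
      rw [eval_app]
      have hfn : (f, ts.length) ∈ σF := hf _ (by rw [funcs_app]; exact List.mem_cons_self)
      have hfn' : (f, (ts.map (Term.subst v)).length) ∈ σF := by simpa using hfn
      have hsub : ∀ u ∈ ts, u.subst v ∈ D := fun u hu =>
        hcl f _ hfn' hm _ (List.mem_map_of_mem (f := Term.subst v) hu)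
      have hmap : ts.map (eval D c0 v) = ts.map (Term.subst v) :=
        List.map_congr_left (fun u hu => ih u hu
          (fun fn hfm => hf fn (by
            rw [funcs_app]; exact List.mem_cons_of_mem _ (List.mem_flatMap.mpr ⟨u, hu, hfm⟩)))
          (hsub u hu))
      rw [hmap, if_pos hm]

theorem le_foldr_max (l : List ℕ) : ∀ x ∈ l, x ≤ l.foldr max 0 := by
  induction l with
  | nil => simp
  | cons a l ih =>
      intro x hx
      rcases List.mem_cons.mp hx with h | h
      · subst h; exact le_max_left _ _
      · exact le_trans (ih x h) (le_max_right _ _)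

theorem atom_ground_iff (a : Atom P F) : a.IsGround ↔ ∀ t ∈ a.args, t.IsGround := by
  rw [Atom.IsGround, Atom.vars, List.flatMap_eq_nil_iff]; rfl

theorem rangeVars_subst (g : ℕ → Term F) (ds : List (Term F))
    (h : ∀ j, (hj : j < ds.length) → g j = ds[j]) :
    (rangeVars (F := F) ds.length).map (Term.subst g) = ds := by
  apply List.ext_getElem
  · simp [rangeVars]
  · intro j h1 h2
    simp only [rangeVars, List.getElem_map, List.getElem_range, subst_var]
    exact h j h2

end RRaux

/-- **Completeness of range-restriction** (Proposition 1): for every clause set `M`,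
if `rr(M)` is satisfiable then `M` is satisfiable. -/
theorem rr_completeness {P F : Type} [DecidableEq P] [DecidableEq F]
    (σ : Sig P F) (domP : P) (c : F) (M : Set (Clause P F))
    (hfin : M.Finite) (hwf : WFSet σ M)
    (hdomFresh : ∀ n, (domP, n) ∉ σ.preds)
    (hsat : Satisfiable (rr σ domP c M)) :
    Satisfiable M := by
  classical
  obtain ⟨I, hIg, hI⟩ := hsat
  set c0 : Term F := cTerm c with hc0def
  set D : Set (Term F) := {t | domAtom domP t ∈ I} with hDdef
  have hDmem : ∀ t : Term F, t ∈ D ↔ domAtom domP t ∈ I := fun t => Iff.rfl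
  have hDground : ∀ t ∈ D, t.IsGround := by
    intro t ht
    have h := hIg _ ((hDmem t).mp ht)
    simpa [Atom.IsGround, Atom.vars, domAtom, Term.IsGround] using h
  have hc0g : c0.IsGround := by
    simp [hc0def, cTerm, Term.IsGround, RRaux.vars_app]
  have hc0subst : ∀ g : ℕ → Term F, c0.subst g = c0 := by
    intro g; simp [hc0def, cTerm, RRaux.subst_app]
  -- dom(c) holds
  have hc0D : c0 ∈ D := by
    have hmem : rangeRestrictClause domP (domcClause domP c) ∈ rr σ domP c M := by
      left; left; exact ⟨domcClause domP c, Or.inl (Or.inr rfl), rfl⟩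
    have hcl := hI _ hmem
    have hbody : ∀ a ∈ (rangeRestrictClause domP (domcClause domP c)).body,
        a.subst (fun _ => c0) ∈ I := by
      intro a ha
      simp [rangeRestrictClause, domcClause, Clause.headVars, Atom.vars, domAtom,
        cTerm, RRaux.vars_app] at ha
    obtain ⟨b, hb, hbI⟩ := hcl (fun _ => c0) (fun _ => hc0g) hbody
    simp only [rangeRestrictClause, domcClause] at hb
    rw [List.mem_singleton] at hb
    subst hb
    rw [hDmem]
    have : (domAtom domP c0).subst (fun _ => c0) = domAtom domP c0 := by
      simp [domAtom, Atom.subst, hc0subst]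
    rwa [this] at hbI
  -- subterm closure of D (step 5)
  have hclosure : ∀ (f : F) (ts : List (Term F)), (f, ts.length) ∈ σ.funcs →
      Term.app f ts ∈ D → ∀ t ∈ ts, t ∈ D := by
    intro f ts hfn hmemD t ht
    obtain ⟨i, hi, rfl⟩ := List.mem_iff_getElem.mp ht
    have htsg : ∀ u ∈ ts, Term.IsGround u :=
      RRaux.isGround_app.mp (hDground _ hmemD)
    set g5 : ℕ → Term F := fun m => if hm : m < ts.length then ts[m] else c0 with hg5
    have hg5g : GroundSubst g5 := by
      intro n
      by_cases hn : n < ts.length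
      · simp only [hg5, dif_pos hn]; exact htsg _ (List.getElem_mem _)
      · simp only [hg5, dif_neg hn]; exact hc0g
    have hmem5 : (⟨[domAtom domP (Term.var i)],
        [domAtom domP (Term.app f (rangeVars ts.length))]⟩ : Clause P F) ∈ rr σ domP c M :=
      Or.inr ⟨(f, ts.length), hfn, i, hi, rfl⟩
    have hrv : (rangeVars (F := F) ts.length).map (Term.subst g5) = ts :=
      RRaux.rangeVars_subst g5 ts (fun j hj => by simp only [hg5, dif_pos hj])
    have hbody : ∀ a ∈ [domAtom domP (Term.app f (rangeVars (F := F) ts.length))],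
        a.subst g5 ∈ I := by
      intro a ha
      rw [List.mem_singleton] at ha; subst ha
      have : (domAtom domP (Term.app f (rangeVars (F := F) ts.length))).subst g5
          = domAtom domP (Term.app f ts) := by
        simp only [domAtom, Atom.subst, List.map_cons, List.map_nil, RRaux.subst_app, hrv]
      rw [this]
      exact (hDmem _).mp hmemD
    obtain ⟨b, hb, hbI⟩ := hI _ hmem5 g5 hg5g hbody
    rw [List.mem_singleton] at hb; subst hb
    rw [hDmem]
    have : (domAtom domP (Term.var i)).subst g5 = domAtom domP ts[i] := by
      simp only [domAtom, Atom.subst, List.map_cons, List.map_nil, RRaux.subst_var,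
        hg5, dif_pos hi]
    rwa [this] at hbI
  -- step 4: arguments of true atoms over σ are in D
  have hpred : ∀ (p : P) (ds : List (Term F)), (p, ds.length) ∈ σ.preds →
      (⟨p, ds⟩ : Atom P F) ∈ I → ∀ t ∈ ds, t ∈ D := by
    intro p ds hpn hmemI t ht
    obtain ⟨i, hi, rfl⟩ := List.mem_iff_getElem.mp ht
    have hdsg : ∀ u ∈ ds, Term.IsGround u := by
      have h := hIg _ hmemI
      rw [RRaux.atom_ground_iff] at h
      exact h
    set g4 : ℕ → Term F := fun m => if hm : m < ds.length then ds[m] else c0 with hg4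
    have hg4g : GroundSubst g4 := by
      intro n
      by_cases hn : n < ds.length
      · simp only [hg4, dif_pos hn]; exact hdsg _ (List.getElem_mem _)
      · simp only [hg4, dif_neg hn]; exact hc0g
    have hmem4 : (⟨[domAtom domP (Term.var i)],
        [⟨p, rangeVars ds.length⟩]⟩ : Clause P F) ∈ rr σ domP c M :=
      Or.inl (Or.inr ⟨(p, ds.length), hpn, i, hi, rfl⟩)
    have hrv : (rangeVars (F := F) ds.length).map (Term.subst g4) = ds :=
      RRaux.rangeVars_subst g4 ds (fun j hj => by simp only [hg4, dif_pos hj])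
    have hbody : ∀ a ∈ [(⟨p, rangeVars (F := F) ds.length⟩ : Atom P F)], a.subst g4 ∈ I := by
      intro a ha
      rw [List.mem_singleton] at ha; subst ha
      have : (⟨p, rangeVars (F := F) ds.length⟩ : Atom P F).subst g4 = ⟨p, ds⟩ := by
        simp only [Atom.subst, hrv]
      rw [this]; exact hmemI
    obtain ⟨b, hb, hbI⟩ := hI _ hmem4 g4 hg4g hbody
    rw [List.mem_singleton] at hb; subst hb
    rw [hDmem]
    have : (domAtom domP (Term.var i)).subst g4 = domAtom domP ds[i] := by
      simp only [domAtom, Atom.subst, List.map_cons, List.map_nil, RRaux.subst_var,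
        hg4, dif_pos hi]
    rwa [this] at hbI
  -- step 2: body argument terms substituted into D land in D
  have hstep2 : ∀ v : ℕ → Term F, (∀ n, v n ∈ D) → ∀ C ∈ M, ∀ a ∈ C.body,
      (⟨a.pred, a.args.map (RRaux.eval D c0 v)⟩ : Atom P F) ∈ I →
      ∀ t ∈ a.args, t.subst v ∈ D := by
    intro v hv C hC a ha hmemI t ht
    have hvg : ∀ n, (v n).IsGround := fun n => hDground _ (hv n)
    by_cases hvar : t.isVar
    · cases t with
      | var y => rw [RRaux.subst_var]; exact hv y
      | app f ts => simp [Term.isVar] at hvar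
    · obtain ⟨i, hi, rfl⟩ := List.mem_iff_getElem.mp ht
      set base := C.maxVar + 1 with hbase
      have hvb : ∀ x ∈ C.vars, x < base := fun x hx =>
        Nat.lt_succ_of_le (RRaux.le_foldr_max _ x hx)
      have havars : ∀ x ∈ a.vars, x ∈ C.vars := by
        intro x hx
        exact List.mem_flatMap.mpr ⟨a, List.mem_append_right _ ha, hx⟩
      have hargvars : ∀ u ∈ a.args, ∀ x ∈ u.vars, x < base := by
        intro u hu x hx
        exact hvb x (havars x (List.mem_flatMap.mpr ⟨u, hu, hx⟩))
      set h : ℕ → Term F := fun x =>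
        if hx : base ≤ x ∧ x - base < a.args.length
        then RRaux.eval D c0 v (a.args[x - base]'hx.2) else v x with hh
      have hhD : ∀ x, h x ∈ D := by
        intro x
        by_cases hx : base ≤ x ∧ x - base < a.args.length
        · simp only [hh, dif_pos hx]; exact RRaux.eval_mem hc0D hv _
        · simp only [hh, dif_neg hx]; exact hv x
      have hhg : GroundSubst h := fun n => hDground _ (hhD n)
      have hhlow : ∀ x, x < base → h x = v x := by
        intro x hx
        have : ¬ (base ≤ x ∧ x - base < a.args.length) := by omega
        simp only [hh, dif_neg this]
      -- the step-2 clause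
      have hmem2 : rangeRestrictClause domP
          (⟨[domAtom domP (a.args.get ⟨i, hi⟩)],
            [⟨a.pred, abstrArgs (C.maxVar + 1) a.args⟩]⟩ : Clause P F) ∈ rr σ domP c M := by
        left; left
        refine ⟨_, Or.inr ⟨C, hC, a, ha, ⟨i, hi⟩, ?_, rfl⟩, rfl⟩
        simpa [List.get_eq_getElem] using hvar
      have habstr : (abstrArgs (F := F) base a.args).map (Term.subst h)
          = a.args.map (RRaux.eval D c0 v) := by
        apply List.ext_getElem
        · simp [abstrArgs]
        · intro j h1 h2
          have hj' : j < a.args.length := by simpa using h2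
          simp only [abstrArgs, List.getElem_map, List.getElem_mapIdx]
          by_cases hj : (a.args[j]'hj').isVar
          · rw [if_pos hj]
            cases hja : a.args[j]'hj' with
            | var y =>
                rw [RRaux.subst_var]
                have hy : y < base := by
                  refine hargvars (a.args[j]'hj') (List.getElem_mem hj') y ?_
                  rw [hja, RRaux.vars_var]; exact List.mem_singleton.mpr rfl
                rw [hhlow y hy, ← RRaux.eval_var D c0 v y]
            | app f ts => rw [hja] at hj; simp [Term.isVar] at hj
          · rw [if_neg hj, RRaux.subst_var]
            have hcond : base ≤ base + j ∧ base + j - base < a.args.length := by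
              constructor
              · omega
              · have : base + j - base = j := by omega
                omega
            simp only [hh, dif_pos hcond]
            have hbj : base + j - base = j := by omega
            simp only [hbj]
      have hbody : ∀ b ∈ (rangeRestrictClause domP
          (⟨[domAtom domP (a.args.get ⟨i, hi⟩)],
            [⟨a.pred, abstrArgs (C.maxVar + 1) a.args⟩]⟩ : Clause P F)).body,
          b.subst h ∈ I := by
        intro b hb
        simp only [rangeRestrictClause] at hb
        rcases List.mem_append.mp hb with hb1 | hb2
        · rw [List.mem_singleton] at hb1; subst hb1
          have : (⟨a.pred, abstrArgs (F := F) (C.maxVar + 1) a.args⟩ : Atom P F).subst h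
              = ⟨a.pred, a.args.map (RRaux.eval D c0 v)⟩ := by
            simp only [Atom.subst]
            rw [← hbase, habstr]
          rw [this]; exact hmemI
        · obtain ⟨y, hy, rfl⟩ := List.mem_map.mp hb2
          have hy2 : y ∈ (a.args.get ⟨i, hi⟩).vars := by
            have := List.mem_dedup.mp hy
            have := List.mem_filter.mp this |>.1
            simpa [Clause.headVars, Atom.vars, domAtom] using this
          have hylt : y < base := by
            refine hargvars (a.args.get ⟨i, hi⟩) ?_ y hy2
            rw [List.get_eq_getElem]
            exact List.getElem_mem hi
          have : (domAtom domP (Term.var y)).subst h = domAtom domP (v y) := by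
            simp only [domAtom, Atom.subst, List.map_cons, List.map_nil, RRaux.subst_var,
              hhlow y hylt]
          rw [this]
          exact (hDmem _).mp (hv y)
      obtain ⟨b, hb, hbI⟩ := hI _ hmem2 h hhg hbody
      simp only [rangeRestrictClause] at hb
      rw [List.mem_singleton] at hb; subst hb
      rw [hDmem]
      have hsc : (a.args.get ⟨i, hi⟩).subst h = (a.args[i]).subst v := by
        rw [List.get_eq_getElem]
        exact RRaux.subst_congr _ (fun x hx => hhlow x (hargvars _ (List.getElem_mem _) x hx))
      have : (domAtom domP (a.args.get ⟨i, hi⟩)).subst h = domAtom domP ((a.args[i]).subst v) := by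
        simp only [domAtom, Atom.subst, List.map_cons, List.map_nil, hsc]
      rwa [this] at hbI
  -- the model of M
  set π : Term F → Term F := RRaux.eval D c0 (fun _ => c0) with hπ
  refine ⟨{a : Atom P F | a.IsGround ∧ (⟨a.pred, a.args.map π⟩ : Atom P F) ∈ I},
    fun a ha => ha.1, ?_⟩
  intro C hC g hg hbody
  set v : ℕ → Term F := fun n => π (g n) with hv
  have hvD : ∀ n, v n ∈ D := fun n => RRaux.eval_mem hc0D (fun _ => hc0D) _
  have hvg : GroundSubst v := fun n => hDground _ (hvD n)
  have hπs : ∀ t : Term F, π (t.subst g) = RRaux.eval D c0 v t := fun t =>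
    RRaux.eval_subst D c0 (fun _ => c0) g t
  have hfuncs : ∀ a ∈ C.atoms, ∀ t ∈ a.args, ∀ fn ∈ Term.funcs t, fn ∈ σ.funcs := by
    intro a ha t ht fn hfn
    exact (hwf C hC).2 fn (List.mem_flatMap.mpr ⟨a, ha, List.mem_flatMap.mpr ⟨t, ht, hfn⟩⟩)
  have hbody' : ∀ a ∈ C.body, (⟨a.pred, a.args.map (RRaux.eval D c0 v)⟩ : Atom P F) ∈ I := by
    intro a ha
    have h2 := (hbody a ha).2
    have : ((a.subst g).args).map π = a.args.map (RRaux.eval D c0 v) := by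
      simp only [Atom.subst, List.map_map]
      exact List.map_congr_left (fun t ht => hπs t)
    simp only [Atom.subst] at this h2 ⊢
    rwa [this] at h2
  have hbodysubst : ∀ a ∈ C.body, a.subst v ∈ I := by
    intro a ha
    have heq : a.args.map (RRaux.eval D c0 v) = a.args.map (Term.subst v) :=
      List.map_congr_left (fun t ht => RRaux.eval_eq_subst hclosure t
        (hfuncs a (List.mem_append_right _ ha) t ht)
        (hstep2 v hvD C hC a ha (hbody' a ha) t ht))
    have := hbody' a ha
    rw [heq] at this
    exact this
  -- apply the range-restricted clause for C
  have hmemC : rangeRestrictClause domP C ∈ rr σ domP c M := by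
    left; left; exact ⟨C, Or.inl (Or.inl hC), rfl⟩
  have hbodyC : ∀ b ∈ (rangeRestrictClause domP C).body, b.subst v ∈ I := by
    intro b hb
    simp only [rangeRestrictClause] at hb
    rcases List.mem_append.mp hb with hb1 | hb2
    · exact hbodysubst b hb1
    · obtain ⟨y, hy, rfl⟩ := List.mem_map.mp hb2
      have : (domAtom domP (Term.var y)).subst v = domAtom domP (v y) := by
        simp only [domAtom, Atom.subst, List.map_cons, List.map_nil, RRaux.subst_var]
      rw [this]
      exact (hDmem _).mp (hvD y)
  obtain ⟨b, hb, hbI⟩ := hI _ hmemC v hvg hbodyC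
  simp only [rangeRestrictClause] at hb
  refine ⟨b, hb, ?_, ?_⟩
  · rw [Atom.subst, RRaux.atom_ground_iff]
    intro t ht
    obtain ⟨u, hu, rfl⟩ := List.mem_map.mp ht
    exact RRaux.subst_isGround hg u
  · have hbatoms : b ∈ C.atoms := List.mem_append_left _ hb
    have hpn : (b.pred, b.args.length) ∈ σ.preds :=
      (hwf C hC).1 _ (List.mem_map_of_mem (f := fun a : Atom P F => (a.pred, a.args.length)) hbatoms)
    have hpn' : (b.pred, (b.args.map (Term.subst v)).length) ∈ σ.preds := by simpa using hpn
    have hbI' : (⟨b.pred, b.args.map (Term.subst v)⟩ : Atom P F) ∈ I := hbI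
    have hargD : ∀ t ∈ b.args, t.subst v ∈ D := by
      intro t ht
      exact hpred b.pred (b.args.map (Term.subst v)) hpn' hbI' _ (List.mem_map_of_mem (f := Term.subst v) ht)
    have heq : b.args.map (RRaux.eval D c0 v) = b.args.map (Term.subst v) :=
      List.map_congr_left (fun t ht => RRaux.eval_eq_subst hclosure t
        (hfuncs b hbatoms t ht) (hargD t ht))
    have : ((b.subst g).args).map π = b.args.map (RRaux.eval D c0 v) := by
      simp only [Atom.subst, List.map_map]
      exact List.map_congr_left (fun t ht => hπs t)
    simp only [Atom.subst] at this ⊢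
    rw [this, heq]
    exact hbI'

end BUMG
end

section
/- Soundness of the range-restricting transformation rr: for every clause set M, if M is satisfiable then rr(M) is satisfiable. -/
namespace BUMG

variable {P F : Type}

lemma term_subst_ground (g : ℕ → Term F) (hg : GroundSubst g) :
    ∀ t : Term F, (t.subst g).IsGround := by
  intro t
  induction t using Term.subst.induct with
  | case1 n => simpa [Term.subst] using hg n
  | case2 f ts ih =>
    simp only [Term.subst, Term.IsGround, Term.vars]
    rw [List.flatMap_eq_nil_iff]
    rintro ⟨s, hs⟩ -
    simp only [List.mem_map, List.mem_attach, true_and, Subtype.exists] at hs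
    obtain ⟨u, hu, rfl⟩ := hs
    exact ih ⟨u, hu⟩

lemma atom_subst_ground (g : ℕ → Term F) (hg : GroundSubst g) (a : Atom P F) :
    (a.subst g).IsGround := by
  simp only [Atom.subst, Atom.IsGround, Atom.vars]
  rw [List.flatMap_eq_nil_iff]
  intro t ht
  simp only [List.mem_map] at ht
  obtain ⟨s, _, rfl⟩ := ht
  exact term_subst_ground g hg s

lemma domAtom_subst (g : ℕ → Term F) (t : Term F) :
    (domAtom domP t).subst g = domAtom domP (t.subst g) := by
  simp [domAtom, Atom.subst]

lemma domAtom_ground {t : Term F} (ht : t.IsGround) : (domAtom domP t).IsGround := by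
  simp only [domAtom, Atom.IsGround, Atom.vars, List.flatMap_cons, List.flatMap_nil,
    List.append_nil]
  exact ht

/-- **Soundness of range-restriction**: for every clause set `M`,
if `M` is satisfiable then `rr(M)` is satisfiable. -/
theorem rr_soundness {P F : Type} [DecidableEq P] [DecidableEq F]
    (σ : Sig P F) (domP : P) (c : F) (M : Set (Clause P F))
    (hfin : M.Finite) (hwf : WFSet σ M)
    (hdomFresh : ∀ n, (domP, n) ∉ σ.preds)
    (hsat : Satisfiable M) :
    Satisfiable (rr σ domP c M) := by
  obtain ⟨I, hIg, hI⟩ := hsat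
  set I' : Set (Atom P F) := I ∪ {a | ∃ t : Term F, t.IsGround ∧ a = domAtom domP t} with hI'def
  have hdomIn : ∀ t : Term F, t.IsGround → domAtom domP t ∈ I' := by
    intro t ht; right; exact ⟨t, ht, rfl⟩
  have hpredM : ∀ C ∈ M, ∀ a ∈ C.atoms, a.pred ≠ domP := by
    intro C hC a ha heq
    have := (hwf C hC).1 (a.pred, a.args.length) (by
      simp only [Clause.preds, List.mem_map]; exact ⟨a, ha, rfl⟩)
    rw [heq] at this
    exact hdomFresh _ this
  refine ⟨I', ?_, ?_⟩
  · intro a ha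
    rcases ha with ha | ⟨t, ht, rfl⟩
    · exact hIg a ha
    · exact domAtom_ground ht
  intro D hD
  rcases hD with (⟨C0, hC0, rfl⟩ | hD) | hD
  · -- image of rangeRestrictClause
    rcases hC0 with (hC0 | hC0) | hC0
    · -- C0 ∈ M
      intro g hg hbody
      have hb : ∀ a ∈ C0.body, a.subst g ∈ I := by
        intro a ha
        have : a.subst g ∈ I' := hbody a (by
          simp [rangeRestrictClause, List.mem_append]; exact Or.inl ha)
        rcases this with h | ⟨t, _, haeq⟩
        · exact h
        · exfalso
          apply hpredM C0 hC0 a (by simp [Clause.atoms, List.mem_append, ha])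
          have : (a.subst g).pred = domP := by rw [haeq]; rfl
          simpa [Atom.subst] using this
      obtain ⟨a, ha, hai⟩ := hI C0 hC0 g hg hb
      exact ⟨a, ha, Or.inl hai⟩
    · -- C0 = domcClause
      rcases hC0 with rfl
      intro g hg _
      refine ⟨domAtom domP (cTerm c), by simp [rangeRestrictClause, domcClause], ?_⟩
      rw [domAtom_subst]
      have : (cTerm c : Term F).subst g = cTerm c := by
        simp [cTerm, Term.subst]
      rw [this]
      exact hdomIn _ (by simp [cTerm, Term.IsGround, Term.vars])
    · -- C0 ∈ step2Set
      obtain ⟨C, hC, a, ha, i, hvar, rfl⟩ := hC0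
      intro g hg _
      refine ⟨domAtom domP (a.args.get i), by simp [rangeRestrictClause], ?_⟩
      rw [domAtom_subst]
      exact hdomIn _ (term_subst_ground g hg _)
  · -- step4
    obtain ⟨pn, hpn, i, hi, rfl⟩ := hD
    intro g hg _
    refine ⟨domAtom domP (Term.var i), by simp, ?_⟩
    rw [domAtom_subst]
    exact hdomIn _ (term_subst_ground g hg _)
  · -- step5
    obtain ⟨fn, hfn, i, hi, rfl⟩ := hD
    intro g hg _
    refine ⟨domAtom domP (Term.var i), by simp, ?_⟩
    rw [domAtom_subst]
    exact hdomIn _ (term_subst_ground g hg _)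

end BUMG
end

section
/- Completeness of basic shifting: for every clause set M, if bs(M) is satisfiable then M is satisfiable. -/
namespace BUMG

lemma subst_isGround {F : Type} (g : ℕ → Term F) (hg : GroundSubst g) :
    ∀ t : Term F, (t.subst g).IsGround := by
  intro t
  induction t using Term.subst.induct with
  | case1 n => simpa [Term.subst] using hg n
  | case2 f ts ih =>
    rw [Term.subst, Term.IsGround, Term.vars, List.flatMap_eq_nil_iff]
    rintro ⟨l, hl⟩ -
    obtain ⟨t, ht, rfl⟩ := List.mem_map.mp hl
    exact ih t

/-- **Completeness of basic shifting**: for every clause set `M`, if `bs(M)` is satisfiable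
then `M` is satisfiable. Here `bar` assigns to every predicate symbol `P` the fresh
predicate symbol `P̄` uniquely associated with it. -/
theorem bs_completeness {P F : Type} [DecidableEq P] [DecidableEq F]
    (bar : P → P) (M : Set (Clause P F)) (hfin : M.Finite)
    (hbarInj : Function.Injective bar)
    (hbarFresh : ∀ p n, (bar p, n) ∉ predsOf M)
    (hsat : Satisfiable (bs bar M)) :
    Satisfiable M := by
  obtain ⟨I, hIg, hI⟩ := hsat
  refine ⟨I, hIg, ?_⟩
  intro C hC g hg hbody
  have hbs : satClause I (bsClause bar C) := hI _ (Or.inl ⟨C, hC, rfl⟩)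
  obtain ⟨x, hx, hxI⟩ := hbs g hg (fun a ha => hbody a (List.mem_of_mem_filter ha))
  rcases List.mem_append.mp hx with h | h
  · exact ⟨x, h, hxI⟩
  · exfalso
    obtain ⟨a, ha, rfl⟩ := List.mem_map.mp h
    have haPF : a.hasPF = true := (List.mem_filter.mp ha).2
    have haB : a ∈ C.body := (List.mem_filter.mp ha).1
    set n := a.args.length with hn
    have hpn : (a.pred, n) ∈ shiftedPreds M := ⟨C, hC, a, haB, haPF, rfl⟩
    have hcons : satClause I ⟨[], [⟨a.pred, rangeVars n⟩, ⟨bar a.pred, rangeVars n⟩]⟩ :=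
      hI _ (Or.inr ⟨(a.pred, n), hpn, rfl⟩)
    set h : ℕ → Term F := fun i => Term.subst g (a.args.getD i (Term.var 0)) with hh
    have hgh : GroundSubst h := fun i => subst_isGround g hg _
    have key : ∀ p : P, (Atom.subst h ⟨p, rangeVars n⟩ : Atom P F)
        = ⟨p, a.args.map (Term.subst g)⟩ := by
      intro p
      simp only [Atom.subst]
      congr 1
      apply List.ext_getElem
      · simp [rangeVars, hn]
      · intro i h1 h2
        simp only [rangeVars, List.map_map, List.getElem_map, List.getElem_range,
          Function.comp, Term.subst, hh]
        have hlt : i < a.args.length := by simpa using h2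
        rw [List.getD_eq_getElem _ _ hlt]
    have hall : ∀ b ∈ [(⟨a.pred, rangeVars n⟩ : Atom P F), ⟨bar a.pred, rangeVars n⟩],
        Atom.subst h b ∈ I := by
      intro b hb
      rcases List.mem_cons.mp hb with hb | hb
      · subst hb
        rw [key]
        exact hbody a haB
      · rw [List.mem_singleton] at hb
        subst hb
        rw [key]
        exact hxI
    obtain ⟨x, hx, -⟩ := hcons h hgh hall
    simp at hx

end BUMG
end
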